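/- For σ(x) = sgn(x)x², every nonzero point of ℝ² has a dense orbit in ℝ² under the group Γ(σ) generated by h_σ and v_σ. -/

import Mathlib

open Set

noncomputable section

/-- σ(x) = sgn(x)·x². -/
def sq2 (x : ℝ) : ℝ := Real.sign x * x ^ 2

/-- σ⁻¹(y) = sgn(y)·√|y|. -/
def sq2inv (y : ℝ) : ℝ := Real.sign y * Real.sqrt |y|

def h2 : ℝ × ℝ → ℝ × ℝ := fun p => (p.1 + sq2inv p.2, p.2)
def h2inv : ℝ × ℝ → ℝ × ℝ := fun p => (p.1 - sq2inv p.2, p.2)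
def v2 : ℝ × ℝ → ℝ × ℝ := fun p => (p.1, p.2 + sq2 p.1)
def v2inv : ℝ × ℝ → ℝ × ℝ := fun p => (p.1, p.2 - sq2 p.1)

/-- The σ-rational lines for σ(x) = sgn(x)x². -/
def ratLines2 : Set (Set (ℝ × ℝ)) :=
  {{p : ℝ × ℝ | p.2 = 0}, {p : ℝ × ℝ | p.1 = 0}} ∪
  ((fun w : Function.End (ℝ × ℝ) => w '' {p : ℝ × ℝ | p.2 = 0}) ''
    ↑(Submonoid.closure {(h2 : Function.End (ℝ × ℝ)), v2} : Submonoid (Function.End (ℝ × ℝ)))) ∪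
  ((fun w : Function.End (ℝ × ℝ) => w '' {p : ℝ × ℝ | p.1 = 0}) ''
    ↑(Submonoid.closure {(h2inv : Function.End (ℝ × ℝ)), v2inv} : Submonoid (Function.End (ℝ × ℝ))))

def h2e : Equiv.Perm (ℝ × ℝ) where
  toFun := h2
  invFun := h2inv
  left_inv p := by simp [h2, h2inv]
  right_inv p := by simp [h2, h2inv]

def v2e : Equiv.Perm (ℝ × ℝ) where
  toFun := v2
  invFun := v2inv
  left_inv p := by simp [v2, v2inv]
  right_inv p := by simp [v2, v2inv]

lemma sq2_of_pos {x : ℝ} (hx : 0 < x) : sq2 x = x ^ 2 := by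
  simp [sq2, Real.sign_of_pos hx]

lemma sq2_of_neg {x : ℝ} (hx : x < 0) : sq2 x = -x ^ 2 := by
  simp [sq2, Real.sign_of_neg hx]

lemma sq2_zero : sq2 0 = 0 := by simp [sq2]

lemma sq2inv_of_pos {y : ℝ} (hy : 0 < y) : sq2inv y = Real.sqrt y := by
  simp [sq2inv, Real.sign_of_pos hy, abs_of_pos hy]

lemma sq2inv_of_neg {y : ℝ} (hy : y < 0) : sq2inv y = -Real.sqrt (-y) := by
  simp [sq2inv, Real.sign_of_neg hy, abs_of_neg hy]

lemma sq2inv_zero : sq2inv 0 = 0 := by simp [sq2inv]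

lemma sq2_eq_mul_abs (x : ℝ) : sq2 x = x * |x| := by
  rcases lt_trichotomy x 0 with h | h | h
  · rw [sq2_of_neg h, abs_of_neg h]; ring
  · simp [h, sq2_zero]
  · rw [sq2_of_pos h, abs_of_pos h]; ring

lemma sq2_sq2inv (y : ℝ) : sq2 (sq2inv y) = y := by
  rcases lt_trichotomy y 0 with h | h | h
  · rw [sq2inv_of_neg h]
    have h1 : 0 < Real.sqrt (-y) := Real.sqrt_pos.mpr (by linarith)
    rw [sq2_of_neg (by linarith)]
    rw [neg_pow, Real.sq_sqrt (by linarith : (0:ℝ) ≤ -y)]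
    ring
  · simp [h, sq2inv_zero, sq2_zero]
  · rw [sq2inv_of_pos h]
    have h1 : 0 < Real.sqrt y := Real.sqrt_pos.mpr h
    rw [sq2_of_pos h1, Real.sq_sqrt h.le]

lemma strictMono_sq2 : StrictMono sq2 := by
  intro a b hab
  rw [sq2_eq_mul_abs, sq2_eq_mul_abs]
  rcases le_or_gt 0 a with ha | ha
  · have hb : 0 < b := lt_of_le_of_lt ha hab
    rw [abs_of_nonneg ha, abs_of_pos hb]
    nlinarith
  · rw [abs_of_neg ha]
    rcases le_or_gt b 0 with hb | hb
    · rw [abs_of_nonpos hb]; nlinarith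
    · rw [abs_of_pos hb]; nlinarith

lemma surjective_sq2 : Function.Surjective sq2 := fun y => ⟨sq2inv y, sq2_sq2inv y⟩

lemma continuous_sq2inv : Continuous sq2inv := by
  have hsymm : ∀ y, ((StrictMono.orderIsoOfSurjective sq2 strictMono_sq2 surjective_sq2).symm : ℝ → ℝ) y = sq2inv y := by
    intro y
    apply strictMono_sq2.injective
    have h2 := (StrictMono.orderIsoOfSurjective sq2 strictMono_sq2 surjective_sq2).apply_symm_apply y
    rw [show ((StrictMono.orderIsoOfSurjective sq2 strictMono_sq2 surjective_sq2) : ℝ → ℝ) = sq2 from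
      StrictMono.coe_orderIsoOfSurjective sq2 strictMono_sq2 surjective_sq2] at h2
    rw [h2, sq2_sq2inv]
  exact (OrderIso.continuous _).congr fun y => hsymm y

lemma continuous_sq2 : Continuous sq2 := by
  have : Continuous fun x : ℝ => x * |x| := continuous_id.mul continuous_abs
  exact this.congr fun x => (sq2_eq_mul_abs x).symm

lemma continuous_h2 : Continuous h2 :=
  (continuous_fst.add (continuous_sq2inv.comp continuous_snd)).prodMk continuous_snd

lemma continuous_h2inv : Continuous h2inv :=
  (continuous_fst.sub (continuous_sq2inv.comp continuous_snd)).prodMk continuous_snd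

lemma continuous_v2 : Continuous v2 :=
  continuous_fst.prodMk (continuous_snd.add (continuous_sq2.comp continuous_fst))

lemma continuous_v2inv : Continuous v2inv :=
  continuous_fst.prodMk (continuous_snd.sub (continuous_sq2.comp continuous_fst))

def orb (p : ℝ × ℝ) : Set (ℝ × ℝ) :=
  {q : ℝ × ℝ | ∃ g ∈ (Subgroup.closure {h2e, v2e} : Subgroup (Equiv.Perm (ℝ × ℝ))), g p = q}

lemma h2e_mem : h2e ∈ (Subgroup.closure {h2e, v2e} : Subgroup (Equiv.Perm (ℝ × ℝ))) :=
  Subgroup.subset_closure (by simp)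

lemma v2e_mem : v2e ∈ (Subgroup.closure {h2e, v2e} : Subgroup (Equiv.Perm (ℝ × ℝ))) :=
  Subgroup.subset_closure (by simp)

lemma self_mem_orb (p : ℝ × ℝ) : p ∈ orb p := ⟨1, one_mem _, rfl⟩

lemma orb_h2 {p q : ℝ × ℝ} (h : q ∈ orb p) : h2 q ∈ orb p := by
  obtain ⟨g, hg, hgp⟩ := h
  exact ⟨h2e * g, mul_mem h2e_mem hg, by rw [Equiv.Perm.mul_apply, hgp]; rfl⟩

lemma orb_h2inv {p q : ℝ × ℝ} (h : q ∈ orb p) : h2inv q ∈ orb p := by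
  obtain ⟨g, hg, hgp⟩ := h
  exact ⟨h2e⁻¹ * g, mul_mem (inv_mem h2e_mem) hg, by rw [Equiv.Perm.mul_apply, hgp]; rfl⟩

lemma orb_v2 {p q : ℝ × ℝ} (h : q ∈ orb p) : v2 q ∈ orb p := by
  obtain ⟨g, hg, hgp⟩ := h
  exact ⟨v2e * g, mul_mem v2e_mem hg, by rw [Equiv.Perm.mul_apply, hgp]; rfl⟩

lemma orb_v2inv {p q : ℝ × ℝ} (h : q ∈ orb p) : v2inv q ∈ orb p := by
  obtain ⟨g, hg, hgp⟩ := h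
  exact ⟨v2e⁻¹ * g, mul_mem (inv_mem v2e_mem) hg, by rw [Equiv.Perm.mul_apply, hgp]; rfl⟩

/-- Closure of the orbit. -/
def OC (p : ℝ × ℝ) : Set (ℝ × ℝ) := closure (orb p)

lemma isClosed_OC (p : ℝ × ℝ) : IsClosed (OC p) := isClosed_closure

lemma self_mem_OC (p : ℝ × ℝ) : p ∈ OC p := subset_closure (self_mem_orb p)

lemma OC_map {p : ℝ × ℝ} (f : ℝ × ℝ → ℝ × ℝ) (hf : Continuous f)
    (horb : ∀ q ∈ orb p, f q ∈ orb p) {z : ℝ × ℝ} (hz : z ∈ OC p) : f z ∈ OC p := by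
  have h1 : f z ∈ f '' closure (orb p) := ⟨z, hz, rfl⟩
  have h2 := image_closure_subset_closure_image (s := orb p) hf h1
  refine closure_mono ?_ h2
  rintro _ ⟨q, hq, rfl⟩
  exact horb q hq

lemma OC_h2 {p z : ℝ × ℝ} (hz : z ∈ OC p) : (z.1 + sq2inv z.2, z.2) ∈ OC p :=
  OC_map h2 continuous_h2 (fun _ hq => orb_h2 hq) hz

lemma OC_h2inv {p z : ℝ × ℝ} (hz : z ∈ OC p) : (z.1 - sq2inv z.2, z.2) ∈ OC p :=
  OC_map h2inv continuous_h2inv (fun _ hq => orb_h2inv hq) hz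

lemma OC_v2 {p z : ℝ × ℝ} (hz : z ∈ OC p) : (z.1, z.2 + sq2 z.1) ∈ OC p :=
  OC_map v2 continuous_v2 (fun _ hq => orb_v2 hq) hz

lemma OC_v2inv {p z : ℝ × ℝ} (hz : z ∈ OC p) : (z.1, z.2 - sq2 z.1) ∈ OC p :=
  OC_map v2inv continuous_v2inv (fun _ hq => orb_v2inv hq) hz

lemma OC_hk {p : ℝ × ℝ} (k : ℤ) {z : ℝ × ℝ} (hz : z ∈ OC p) :
    (z.1 + (k : ℝ) * sq2inv z.2, z.2) ∈ OC p := by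
  induction k using Int.induction_on with
  | zero => simpa using hz
  | succ i ih =>
      have h := OC_h2 (p := p) ih
      simpa [add_mul, add_assoc] using h
  | pred i ih =>
      have h := OC_h2inv (p := p) ih
      have : z.1 + (-(i:ℝ) - 1) * sq2inv z.2 = z.1 + (-(i:ℝ)) * sq2inv z.2 - sq2inv z.2 := by ring
      rw [show ((-(i:ℝ) - 1)) = ((-(i:ℝ)) - 1) from rfl] at *
      simpa [this] using h

lemma OC_vm {p : ℝ × ℝ} (m : ℤ) {z : ℝ × ℝ} (hz : z ∈ OC p) :
    (z.1, z.2 + (m : ℝ) * sq2 z.1) ∈ OC p := by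
  induction m using Int.induction_on with
  | zero => simpa using hz
  | succ i ih =>
      have h := OC_v2 (p := p) ih
      simpa [add_mul, add_assoc] using h
  | pred i ih =>
      have h := OC_v2inv (p := p) ih
      have : z.2 + (-(i:ℝ) - 1) * sq2 z.1 = z.2 + (-(i:ℝ)) * sq2 z.1 - sq2 z.1 := by ring
      simpa [this] using h

lemma sq2inv_ne_zero {y : ℝ} (hy : y ≠ 0) : sq2inv y ≠ 0 := by
  intro h
  apply hy
  rw [← sq2_sq2inv y, h, sq2_zero]

lemma exists_xpos {p : ℝ × ℝ} (hp : p ≠ 0) : ∃ q ∈ OC p, 0 < q.1 := by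
  have h1 : ∃ q ∈ OC p, q.1 ≠ 0 := by
    by_cases hx : p.1 ≠ 0
    · exact ⟨p, self_mem_OC p, hx⟩
    · push_neg at hx
      have hy : p.2 ≠ 0 := by
        intro h
        exact hp (Prod.ext_iff.mpr ⟨hx, h⟩)
      refine ⟨(p.1 + sq2inv p.2, p.2), OC_h2 (self_mem_OC p), ?_⟩
      simpa [hx] using sq2inv_ne_zero hy
  obtain ⟨q, hq, hq1⟩ := h1
  rcases lt_or_gt_of_ne hq1 with hneg | hpos
  swap
  · exact ⟨q, hq, hpos⟩
  have h2 : ∃ r ∈ OC p, r.1 = q.1 ∧ r.2 ≠ 0 := by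
    by_cases hy : q.2 ≠ 0
    · exact ⟨q, hq, rfl, hy⟩
    · push_neg at hy
      refine ⟨(q.1, q.2 + sq2 q.1), OC_v2 hq, rfl, ?_⟩
      rw [hy, sq2_of_neg hneg]
      simp only [zero_add]
      have : (0:ℝ) < q.1 ^ 2 := by positivity
      intro hcon
      rw [neg_eq_zero] at hcon
      exact this.ne' hcon
  obtain ⟨r, hr, hr1, hr2⟩ := h2
  set s : ℝ := sq2inv r.2 with hs_def
  have hs : s ≠ 0 := sq2inv_ne_zero hr2
  have habs : 0 < |s| := abs_pos.mpr hs
  obtain ⟨n, hn⟩ := exists_nat_gt ((1 - q.1) / |s|)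
  set k : ℤ := if 0 < s then (n : ℤ) else -(n : ℤ) with hk_def
  have hks : (k : ℝ) * s = (n : ℝ) * |s| := by
    by_cases hpos : 0 < s
    · rw [hk_def, if_pos hpos, abs_of_pos hpos]; push_cast; ring
    · have hneg' : s < 0 := lt_of_le_of_ne (not_lt.mp hpos) hs
      rw [hk_def, if_neg hpos, abs_of_neg hneg']; push_cast; ring
  have hgt : 1 - q.1 < (n : ℝ) * |s| := (div_lt_iff₀ habs).mp hn
  refine ⟨(r.1 + (k : ℝ) * sq2inv r.2, r.2), OC_hk k hr, ?_⟩
  simp only [← hs_def]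
  rw [hks, hr1]
  linarith

set_option maxHeartbeats 2000000 in
lemma yaxis_mem {p : ℝ × ℝ} (q : ℝ × ℝ) (hq : q ∈ OC p) (hx : 0 < q.1) (b : ℝ) :
    ((0 : ℝ), b) ∈ OC p := by
  obtain ⟨x, y⟩ := q
  simp only at hx
  set α : ℝ := y / x ^ 2 with hα_def
  set mZ : ℤ := ⌊-α⌋ + 1 with hmZ_def
  set d : ℝ := (mZ : ℝ) + α with hd_def
  have hd0 : 0 < d := by
    have := Int.lt_floor_add_one (-α)
    rw [hd_def, hmZ_def]
    push_cast
    linarith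
  have hd1 : d ≤ 1 := by
    have := Int.floor_le (-α)
    rw [hd_def, hmZ_def]
    push_cast
    linarith
  set A : ℝ := x ^ 2 * d with hA_def
  have hA : 0 < A := by positivity
  have z1 : ((x : ℝ), A) ∈ OC p := by
    have h := OC_vm mZ hq
    simp only at h
    have e1 : y + (mZ : ℝ) * sq2 x = A := by
      rw [sq2_of_pos hx, hA_def, hd_def, hα_def]
      field_simp
      ring
    rwa [e1] at h
  rw [show ((0:ℝ), b) ∈ OC p ↔ ((0:ℝ), b) ∈ closure (OC p) by
    rw [(isClosed_OC p).closure_eq]]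
  rw [Metric.mem_closure_iff]
  intro ε hε
  have hsqε : 0 < Real.sqrt ε := Real.sqrt_pos.mpr hε
  obtain ⟨k, hk⟩ := exists_nat_gt (max (max (Real.sqrt A / ε) (Real.sqrt A / Real.sqrt ε)) 1)
  have hk1 : (1 : ℝ) < (k : ℝ) := lt_of_le_of_lt (le_max_right _ _) hk
  have hk0 : (0 : ℝ) < (k : ℝ) := by linarith
  have hkA : Real.sqrt A / ε < (k : ℝ) :=
    lt_of_le_of_lt (le_trans (le_max_left _ _) (le_max_left _ _)) hk
  have hkB : Real.sqrt A / Real.sqrt ε < (k : ℝ) :=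
    lt_of_le_of_lt (le_trans (le_max_right _ _) (le_max_left _ _)) hk
  have hsA : 0 < Real.sqrt A := Real.sqrt_pos.mpr hA
  set X : ℝ := x + (k : ℝ) * Real.sqrt A with hX_def
  have hX : 0 < X := by positivity
  have hXk : (k : ℝ) * Real.sqrt A ≤ X := by
    rw [hX_def]; linarith
  have z2 : (X, A) ∈ OC p := by
    have h := OC_hk (k : ℤ) z1
    simp only at h
    rwa [sq2inv_of_pos hA, show (((k:ℤ) : ℝ)) = (k : ℝ) by push_cast; rfl] at h
  set H : ℝ := A + X ^ 2 with hH_def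
  have hH : 0 < H := by positivity
  have z3 : (X, H) ∈ OC p := by
    have h := OC_vm 1 z2
    simp only at h
    rwa [sq2_of_pos hX, show A + ((1:ℤ):ℝ) * X ^ 2 = H by push_cast; rw [hH_def]; ring] at h
  set ξ : ℝ := X - Real.sqrt H with hξ_def
  have z4 : (ξ, H) ∈ OC p := by
    have h := OC_hk (-1) z3
    simp only at h
    rwa [sq2inv_of_pos hH, show X + ((-1:ℤ):ℝ) * Real.sqrt H = ξ by push_cast; rw [hξ_def]; ring] at h
  have hξneg : ξ < 0 := by
    rw [hξ_def, sub_neg]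
    rw [show X = Real.sqrt (X^2) from (Real.sqrt_sq hX.le).symm]
    exact Real.sqrt_lt_sqrt (by positivity) (by rw [hH_def]; linarith)
  have hξbound : Real.sqrt H - X ≤ Real.sqrt A / (k : ℝ) := by
    have h1 : Real.sqrt H ≤ X + A / (2 * X) := by
      have h2 : H ≤ (X + A / (2 * X)) ^ 2 := by
        have : (X + A / (2 * X)) ^ 2 = X^2 + A + (A / (2*X))^2 := by
          field_simp
          ring
        rw [this, hH_def]
        nlinarith [sq_nonneg (A / (2*X))]
      calc Real.sqrt H ≤ Real.sqrt ((X + A / (2*X))^2) := Real.sqrt_le_sqrt h2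
        _ = X + A / (2*X) := Real.sqrt_sq (by positivity)
    have h3 : A / (2 * X) ≤ Real.sqrt A / (k : ℝ) := by
      have hXge : (k : ℝ) * Real.sqrt A ≤ 2 * X := by nlinarith
      rw [div_le_div_iff₀ (by positivity) hk0]
      calc A * (k:ℝ) = Real.sqrt A * Real.sqrt A * (k : ℝ) := by
            rw [Real.mul_self_sqrt hA.le]
        _ ≤ Real.sqrt A * (2 * X) := by nlinarith
    linarith
  have hξabs : |ξ| ≤ Real.sqrt A / (k : ℝ) := by
    rw [abs_of_neg hξneg, hξ_def]
    linarith
  have hsmall1 : Real.sqrt A / (k : ℝ) < ε := (div_lt_iff₀ hk0).mpr (by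
    have := (div_lt_iff₀ hε).mp hkA
    linarith)
  have hsmall2 : (Real.sqrt A / (k : ℝ)) ^ 2 < ε := by
    have h1 : Real.sqrt A / (k : ℝ) < Real.sqrt ε := (div_lt_iff₀ hk0).mpr (by
      have := (div_lt_iff₀ hsqε).mp hkB
      linarith)
    have h2 : (Real.sqrt A / (k : ℝ)) ^ 2 < Real.sqrt ε ^ 2 := by
      apply pow_lt_pow_left₀ h1 (by positivity)
      norm_num
    rwa [Real.sq_sqrt hε.le] at h2
  have hξ2 : 0 < ξ ^ 2 := pow_pos (abs_pos.mpr hξneg.ne) 2 |>.trans_eq (by rw [sq_abs]) |>.trans_le le_rfl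
  set m' : ℤ := ⌊(H - b) / ξ ^ 2⌋ with hm'_def
  have z5 : (ξ, H - (m' : ℝ) * ξ ^ 2) ∈ OC p := by
    have h := OC_vm m' z4
    simp only at h
    rwa [sq2_of_neg hξneg, show H + (m' : ℝ) * -ξ^2 = H - (m':ℝ) * ξ^2 by ring] at h
  refine ⟨(ξ, H - (m' : ℝ) * ξ ^ 2), z5, ?_⟩
  rw [Prod.dist_eq]
  apply max_lt
  · rw [Real.dist_eq, zero_sub, abs_neg]
    exact lt_of_le_of_lt hξabs hsmall1
  · rw [Real.dist_eq]
    have hfl : (m' : ℝ) ≤ (H - b) / ξ ^ 2 := Int.floor_le _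
    have hfu : (H - b) / ξ ^ 2 < (m' : ℝ) + 1 := Int.lt_floor_add_one _
    have hl : (m' : ℝ) * ξ ^ 2 ≤ H - b := by
      have := mul_le_mul_of_nonneg_right hfl hξ2.le
      rwa [div_mul_cancel₀ _ hξ2.ne'] at this
    have hu : H - b < ((m' : ℝ) + 1) * ξ ^ 2 := by
      have := mul_lt_mul_of_pos_right hfu hξ2
      rwa [div_mul_cancel₀ _ hξ2.ne'] at this
    have habs2 : |b - (H - (m' : ℝ) * ξ ^ 2)| < ξ ^ 2 := by
      rw [abs_sub_comm, abs_of_nonneg (by linarith)]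
      linarith
    have hξsq : ξ ^ 2 ≤ (Real.sqrt A / (k : ℝ)) ^ 2 := by
      rw [← sq_abs]
      exact pow_le_pow_left₀ (abs_nonneg ξ) hξabs 2
    exact lt_of_lt_of_le habs2 (le_trans hξsq hsmall2.le)

set_option maxHeartbeats 1000000 in
lemma lip_aux {M a b : ℝ} (hM : 1 ≤ M) (ha : 1 ≤ a) (hb : 1 ≤ b) (hab : b ≤ a) :
    0 ≤ a / Real.sqrt (1 + M * a^2) - b / Real.sqrt (1 + M * b^2) ∧
    a / Real.sqrt (1 + M * a^2) - b / Real.sqrt (1 + M * b^2) ≤ (a - b) / 2 := by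
  have hM0 : (0:ℝ) ≤ M := by linarith
  set A : ℝ := Real.sqrt (1 + M * a^2) with hA_def
  set B : ℝ := Real.sqrt (1 + M * b^2) with hB_def
  have hA2 : A^2 = 1 + M * a^2 := Real.sq_sqrt (by positivity)
  have hB2 : B^2 = 1 + M * b^2 := Real.sq_sqrt (by positivity)
  have hA1 : 1 ≤ A := Real.one_le_sqrt.mpr (by nlinarith)
  have hB1 : 1 ≤ B := Real.one_le_sqrt.mpr (by nlinarith)
  have hA0 : 0 < A := by linarith
  have hB0 : 0 < B := by linarith
  have keysq : (a*B)^2 - (b*A)^2 = a^2 - b^2 := by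
    rw [mul_pow, mul_pow, hA2, hB2]; ring
  have key : (a*B - b*A) * (a*B + b*A) = a^2 - b^2 := by
    rw [← keysq]; ring
  have pos : 0 < a*B + b*A := by nlinarith
  have hnum : a*B - b*A = (a^2 - b^2) / (a*B + b*A) := by
    rw [eq_div_iff pos.ne']; exact key
  have hdiffge : 0 ≤ a*B - b*A := by
    rw [hnum]
    apply div_nonneg _ pos.le
    nlinarith
  have expr : a/A - b/B = (a*B - A*b) / (A*B) := div_sub_div a b hA0.ne' hB0.ne'
  have e1 : (a*B + b*A) * (A*B) = a*A*B^2 + b*B*A^2 := by ring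
  rw [hA2, hB2] at e1
  have ha0 : (0:ℝ) < a := by linarith
  have hb0 : (0:ℝ) < b := by linarith
  have h2ab : 2*(a+b) ≤ (a*B + b*A) * (A*B) := by
    rw [e1]
    have p1 : a ≤ a*A := by nlinarith
    have p2 : b ≤ b*B := by nlinarith
    have p3 : 1 + b^2 ≤ 1 + M*b^2 := by nlinarith
    have p4 : 1 + a^2 ≤ 1 + M*a^2 := by nlinarith
    have p5 : (0:ℝ) ≤ 1 + M*b^2 := by positivity
    have p6 : (0:ℝ) ≤ 1 + M*a^2 := by positivity
    have t1 : a*(1 + b^2) ≤ a*A*(1 + M*b^2) :=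
      mul_le_mul p1 p3 (by positivity) (mul_nonneg ha0.le (by linarith))
    have t2 : b*(1 + a^2) ≤ b*B*(1 + M*a^2) :=
      mul_le_mul p2 p4 (by positivity) (mul_nonneg hb0.le (by linarith))
    have t3 : b ≤ a*b^2 := by nlinarith
    have t4 : a ≤ b*a^2 := by nlinarith
    nlinarith
  have h4 : (a*B - b*A) * 2 * (a*B + b*A) ≤ ((a - b) * (A*B)) * (a*B + b*A) := by
    have h5big := mul_le_mul_of_nonneg_left h2ab (sub_nonneg.mpr hab)
    calc (a*B - b*A) * 2 * (a*B + b*A) = (a - b) * (2*(a+b)) := by linear_combination 2*key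
      _ ≤ (a - b) * ((a*B + b*A) * (A*B)) := h5big
      _ = ((a - b) * (A*B)) * (a*B + b*A) := by ring
  have h5 : (a*B - b*A) * 2 ≤ (a - b) * (A*B) := le_of_mul_le_mul_right h4 pos
  constructor
  · rw [expr]
    apply div_nonneg _ (by positivity)
    rw [show a*B - A*b = a*B - b*A by ring]
    exact hdiffge
  · rw [expr, div_le_div_iff₀ (by positivity) (by norm_num : (0:ℝ) < 2)]
    calc (a*B - A*b) * 2 = (a*B - b*A) * 2 := by ring
      _ ≤ (a - b) * (A*B) := h5

lemma lip {M a b : ℝ} (hM : 1 ≤ M) (ha : 1 ≤ a) (hb : 1 ≤ b) :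
    |a / Real.sqrt (1 + M * a^2) - b / Real.sqrt (1 + M * b^2)| ≤ |a - b| / 2 := by
  rcases le_total b a with hab | hab
  · obtain ⟨h1, h2⟩ := lip_aux hM ha hb hab
    rw [abs_of_nonneg h1, abs_of_nonneg (by linarith : (0:ℝ) ≤ a - b)]
    exact h2
  · obtain ⟨h1, h2⟩ := lip_aux hM hb ha hab
    rw [abs_sub_comm, abs_sub_comm a b]
    rw [abs_of_nonneg h1, abs_of_nonneg (by linarith : (0:ℝ) ≤ b - a)]
    exact h2

/-- Peel off one level of the continued-fraction-like expansion. -/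
lemma peel {f : ℝ} (hf0 : 0 < f) (hf1 : f < 1) :
    ∃ m : ℕ, ∃ z' : ℝ, 1 ≤ m ∧ 1 ≤ z' ∧ z' / Real.sqrt (1 + (m:ℝ) * z'^2) = f := by
  set Q : ℝ := (1/f)^2 with hQ_def
  have hf' : 1 < 1/f := by
    rw [lt_div_iff₀ hf0]; linarith
  have hQ1 : 1 < Q := by
    rw [hQ_def]; nlinarith
  set mZ : ℤ := ⌈Q⌉ - 1 with hmZ_def
  have hm1 : 1 ≤ mZ := by
    have : (1:ℤ) < ⌈Q⌉ := Int.lt_ceil.mpr (by exact_mod_cast hQ1)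
    omega
  set d : ℝ := Q - (mZ:ℝ) with hd_def
  have hd0 : 0 < d := by
    have h := Int.ceil_lt_add_one Q
    rw [hd_def, hmZ_def]
    push_cast
    linarith
  have hd1 : d ≤ 1 := by
    have h := Int.le_ceil Q
    rw [hd_def, hmZ_def]
    push_cast
    linarith
  have hsd : 0 < Real.sqrt d := Real.sqrt_pos.mpr hd0
  set z' : ℝ := 1 / Real.sqrt d with hz'_def
  have hz'1 : 1 ≤ z' := by
    rw [hz'_def, le_div_iff₀ hsd, one_mul]
    exact Real.sqrt_le_one.mpr hd1
  refine ⟨mZ.toNat, z', ?_, hz'1, ?_⟩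
  · omega
  · have hmcast : ((mZ.toNat : ℕ) : ℝ) = (mZ : ℝ) := by
      have : ((mZ.toNat : ℤ)) = mZ := Int.toNat_of_nonneg (by omega)
      exact_mod_cast congrArg (fun z : ℤ => (z : ℝ)) this
    have hz2 : z'^2 = 1/d := by
      rw [hz'_def, div_pow, one_pow, Real.sq_sqrt hd0.le]
    have h1m : 1 + (mZ:ℝ) * z'^2 = Q/d := by
      rw [hz2]
      field_simp
      rw [hd_def]
      ring
    have hQ0 : (0:ℝ) ≤ Q := by positivity
    rw [hmcast, h1m, Real.sqrt_div hQ0 d]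
    have hsQ : Real.sqrt Q = 1/f := by
      rw [hQ_def, Real.sqrt_sq (by positivity : (0:ℝ) ≤ 1/f)]
    rw [hsQ, hz'_def]
    field_simp

lemma intG {G : Set ℝ} (h1 : (1:ℝ) ∈ G)
    (hT : ∀ u ∈ G, ∀ k : ℕ, u + (k:ℝ) ∈ G) :
    ∀ K : ℤ, 1 ≤ K → (K:ℝ) ∈ G := by
  intro K hK
  have h := hT 1 h1 (K - 1).toNat
  have hcast : (((K-1).toNat : ℕ) : ℝ) = (K:ℝ) - 1 := by
    have : ((K-1).toNat : ℤ) = K - 1 := Int.toNat_of_nonneg (by omega)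
    exact_mod_cast congrArg (fun z : ℤ => (z : ℝ)) this
  rwa [hcast, show (1:ℝ) + ((K:ℝ) - 1) = (K:ℝ) by ring] at h

lemma oneD {G : Set ℝ} (h1 : (1:ℝ) ∈ G)
    (hT : ∀ u ∈ G, ∀ k : ℕ, u + (k:ℝ) ∈ G)
    (hU : ∀ u ∈ G, ∀ m : ℕ, 1 ≤ m → u / Real.sqrt (1 + (m:ℝ) * u^2) ∈ G) :
    ∀ n : ℕ, ∀ w : ℝ, 1 ≤ w → ∃ u ∈ G, 1 ≤ u ∧ |u - w| ≤ (1/2:ℝ)^n := by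
  intro n
  induction n with
  | zero =>
      intro w hw
      have hK1 : 1 ≤ ⌊w⌋ := by
        rwa [Int.le_floor, Int.cast_one]
      refine ⟨(⌊w⌋:ℝ), intG h1 hT ⌊w⌋ hK1, by exact_mod_cast hK1, ?_⟩
      have hle := Int.floor_le w
      have hlt := Int.lt_floor_add_one w
      rw [abs_of_nonpos (by linarith), pow_zero]
      linarith
  | succ n ih =>
      intro w hw
      set K : ℤ := ⌊w⌋ with hK_def
      have hK1 : 1 ≤ K := by rw [hK_def, Int.le_floor, Int.cast_one]; exact hw
      set f : ℝ := w - (K:ℝ) with hf_def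
      have hf0 : 0 ≤ f := by
        rw [hf_def, hK_def]; have := Int.floor_le w; linarith
      have hf1 : f < 1 := by
        rw [hf_def, hK_def]; have := Int.lt_floor_add_one w; linarith
      by_cases hf : f = 0
      · refine ⟨(K:ℝ), intG h1 hT K hK1, by exact_mod_cast hK1, ?_⟩
        have : (K:ℝ) = w := by rw [hf_def] at hf; linarith
        rw [this, sub_self, abs_zero]
        positivity
      · have hfpos : 0 < f := lt_of_le_of_ne hf0 (Ne.symm hf)
        obtain ⟨m, z', hm1, hz'1, hid⟩ := peel hfpos hf1
        obtain ⟨u', hu'G, hu'1, herr⟩ := ih z' hz'1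
        have hm1' : (1:ℝ) ≤ (m:ℝ) := by exact_mod_cast hm1
        have hgG : u' / Real.sqrt (1 + (m:ℝ) * u'^2) ∈ G := hU u' hu'G m hm1
        have huG : u' / Real.sqrt (1 + (m:ℝ) * u'^2) + (K:ℝ) ∈ G := by
          have h := hT _ hgG K.toNat
          have hcast : ((K.toNat : ℕ) : ℝ) = (K:ℝ) := by
            have : ((K.toNat : ℤ)) = K := Int.toNat_of_nonneg (by omega)
            exact_mod_cast congrArg (fun z : ℤ => (z : ℝ)) this
          rwa [hcast] at h
        refine ⟨_, huG, ?_, ?_⟩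
        · have : 0 ≤ u' / Real.sqrt (1 + (m:ℝ) * u'^2) := by positivity
          have hK1' : (1:ℝ) ≤ (K:ℝ) := by exact_mod_cast hK1
          linarith
        · have hw_eq : w = (K:ℝ) + z' / Real.sqrt (1 + (m:ℝ) * z'^2) := by
            rw [hid]; rw [hf_def]; ring
          have e : u' / Real.sqrt (1 + (m:ℝ) * u'^2) + (K:ℝ) - w
              = u' / Real.sqrt (1 + (m:ℝ) * u'^2) - z' / Real.sqrt (1 + (m:ℝ) * z'^2) := by
            rw [hw_eq]; ring
          rw [e]
          calc |u' / Real.sqrt (1 + (m:ℝ) * u'^2) - z' / Real.sqrt (1 + (m:ℝ) * z'^2)|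
              ≤ |u' - z'| / 2 := lip hm1' hu'1 hz'1
            _ ≤ (1/2:ℝ)^n / 2 := by linarith
            _ = (1/2:ℝ)^(n+1) := by rw [pow_succ]; ring

lemma oneD_dense {G : Set ℝ} (h1 : (1:ℝ) ∈ G)
    (hT : ∀ u ∈ G, ∀ k : ℕ, u + (k:ℝ) ∈ G)
    (hU : ∀ u ∈ G, ∀ m : ℕ, 1 ≤ m → u / Real.sqrt (1 + (m:ℝ) * u^2) ∈ G) :
    ∀ t : ℝ, 0 < t → ∀ ε : ℝ, 0 < ε → ∃ u ∈ G, 0 < u ∧ |u - t| < ε := by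
  intro t ht ε hε
  obtain ⟨n, hn⟩ := exists_pow_lt_of_lt_one hε (by norm_num : (1/2:ℝ) < 1)
  rcases le_or_gt 1 t with h1t | h1t
  · obtain ⟨u, huG, hu1, herr⟩ := oneD h1 hT hU (n+1) t h1t
    refine ⟨u, huG, by linarith, ?_⟩
    have hstep : (1/2:ℝ)^(n+1) ≤ (1/2:ℝ)^n := by
      apply pow_le_pow_of_le_one (by norm_num) (by norm_num)
      omega
    linarith [lt_of_le_of_lt (herr.trans hstep) hn]
  · obtain ⟨m, z', hm1, hz'1, hid⟩ := peel ht h1t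
    obtain ⟨u', hu'G, hu'1, herr⟩ := oneD h1 hT hU n z' hz'1
    have hm1' : (1:ℝ) ≤ (m:ℝ) := by exact_mod_cast hm1
    refine ⟨u' / Real.sqrt (1 + (m:ℝ) * u'^2), hU u' hu'G m hm1, by positivity, ?_⟩
    rw [← hid]
    calc |u' / Real.sqrt (1 + (m:ℝ) * u'^2) - z' / Real.sqrt (1 + (m:ℝ) * z'^2)|
        ≤ |u' - z'| / 2 := lip hm1' hu'1 hz'1
      _ ≤ (1/2:ℝ)^n / 2 := by linarith
      _ < ε := by
          have h2 : (1/2:ℝ)^n / 2 < (1/2:ℝ)^n := by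
            have : (0:ℝ) < (1/2:ℝ)^n := by positivity
            linarith
          linarith

def GsetR (p : ℝ × ℝ) : Set ℝ := {u | 0 < u ∧ ∀ t : ℝ, 0 < t → (t, t^2/u^2) ∈ OC p}

def GsetL (p : ℝ × ℝ) : Set ℝ := {u | 0 < u ∧ ∀ t : ℝ, 0 < t → ((-t : ℝ), -(t^2/u^2)) ∈ OC p}

lemma GR_one {p : ℝ × ℝ} (hax : ∀ b : ℝ, ((0:ℝ), b) ∈ OC p) : (1:ℝ) ∈ GsetR p := by
  refine ⟨one_pos, ?_⟩
  intro t ht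
  have h := OC_h2 (hax (t^2))
  simp only at h
  rw [sq2inv_of_pos (by positivity), Real.sqrt_sq ht.le, zero_add] at h
  have e : t^2/(1:ℝ)^2 = t^2 := by norm_num
  rw [e]
  exact h

lemma GL_one {p : ℝ × ℝ} (hax : ∀ b : ℝ, ((0:ℝ), b) ∈ OC p) : (1:ℝ) ∈ GsetL p := by
  refine ⟨one_pos, ?_⟩
  intro t ht
  have h := OC_h2 (hax (-(t^2)))
  simp only at h
  rw [sq2inv_of_neg (by nlinarith [pow_pos ht 2] : -(t^2) < 0), neg_neg,
    Real.sqrt_sq ht.le, zero_add] at h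
  have e : -(t^2/(1:ℝ)^2) = -(t^2) := by norm_num
  rw [e]
  exact h

lemma GR_T {p : ℝ × ℝ} {u : ℝ} (hu : u ∈ GsetR p) (k : ℕ) : u + (k:ℝ) ∈ GsetR p := by
  obtain ⟨hu0, hmem⟩ := hu
  have huk : 0 < u + (k:ℝ) := by positivity
  refine ⟨huk, ?_⟩
  intro t ht
  set t' : ℝ := t * u / (u + (k:ℝ)) with ht'_def
  have ht' : 0 < t' := by positivity
  have hq : 0 < t'/u := div_pos ht' hu0
  have base := hmem t' ht'
  have h := OC_hk (k : ℤ) base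
  simp only at h
  have hs : sq2inv (t'^2/u^2) = t'/u := by
    rw [show t'^2/u^2 = (t'/u)^2 by ring, sq2inv_of_pos (pow_pos hq 2), Real.sqrt_sq hq.le]
  rw [hs] at h
  have e1 : t' + ((k:ℤ):ℝ) * (t'/u) = t := by
    push_cast
    rw [ht'_def]
    field_simp
  have e2 : t'^2/u^2 = t^2/(u + (k:ℝ))^2 := by
    rw [ht'_def]; field_simp
  rw [e1, e2] at h
  exact h

lemma GL_T {p : ℝ × ℝ} {u : ℝ} (hu : u ∈ GsetL p) (k : ℕ) : u + (k:ℝ) ∈ GsetL p := by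
  obtain ⟨hu0, hmem⟩ := hu
  have huk : 0 < u + (k:ℝ) := by positivity
  refine ⟨huk, ?_⟩
  intro t ht
  set t' : ℝ := t * u / (u + (k:ℝ)) with ht'_def
  have ht' : 0 < t' := by positivity
  have hq : 0 < t'/u := div_pos ht' hu0
  have base := hmem t' ht'
  have h := OC_hk (k : ℤ) base
  simp only at h
  have hs : sq2inv (-(t'^2/u^2)) = -(t'/u) := by
    rw [show t'^2/u^2 = (t'/u)^2 by ring, sq2inv_of_neg (by nlinarith [pow_pos hq 2]),
      neg_neg, Real.sqrt_sq hq.le]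
  rw [hs] at h
  have e1 : -t' + ((k:ℤ):ℝ) * -(t'/u) = -t := by
    push_cast
    rw [ht'_def]
    field_simp
    ring
  have e2 : t'^2/u^2 = t^2/(u + (k:ℝ))^2 := by
    rw [ht'_def]; field_simp
  rw [e1, e2] at h
  exact h

lemma GR_U {p : ℝ × ℝ} {u : ℝ} (hu : u ∈ GsetR p) (m : ℕ) (hm : 1 ≤ m) :
    u / Real.sqrt (1 + (m:ℝ) * u^2) ∈ GsetR p := by
  obtain ⟨hu0, hmem⟩ := hu
  have hsq : 0 < Real.sqrt (1 + (m:ℝ)*u^2) := Real.sqrt_pos.mpr (by positivity)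
  refine ⟨by positivity, ?_⟩
  intro t ht
  have base := hmem t ht
  have h := OC_vm (m : ℤ) base
  simp only at h
  rw [sq2_of_pos ht] at h
  have e : t^2/u^2 + ((m:ℤ):ℝ) * t^2 = t^2 / (u / Real.sqrt (1 + (m:ℝ)*u^2))^2 := by
    rw [div_pow, Real.sq_sqrt (by positivity : (0:ℝ) ≤ 1 + (m:ℝ)*u^2)]
    push_cast
    field_simp
  rw [e] at h
  exact h

lemma GL_U {p : ℝ × ℝ} {u : ℝ} (hu : u ∈ GsetL p) (m : ℕ) (hm : 1 ≤ m) :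
    u / Real.sqrt (1 + (m:ℝ) * u^2) ∈ GsetL p := by
  obtain ⟨hu0, hmem⟩ := hu
  have hsq : 0 < Real.sqrt (1 + (m:ℝ)*u^2) := Real.sqrt_pos.mpr (by positivity)
  refine ⟨by positivity, ?_⟩
  intro t ht
  have base := hmem t ht
  have h := OC_vm (m : ℤ) base
  simp only at h
  rw [sq2_of_neg (by linarith : -t < 0)] at h
  have e : -(t^2/u^2) + ((m:ℤ):ℝ) * -(-t)^2 = -(t^2 / (u / Real.sqrt (1 + (m:ℝ)*u^2))^2) := by
    rw [div_pow, Real.sq_sqrt (by positivity : (0:ℝ) ≤ 1 + (m:ℝ)*u^2)]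
    push_cast
    field_simp
    ring
  rw [e] at h
  exact h

lemma aux_inv {u u₀ : ℝ} (hu : 2/5 ≤ u) (hu₀ : 7/10 ≤ u₀) (hu₀' : u₀ ≤ 1)
    (h : |u - u₀| ≤ 1/4) : |1/u^2 - 1/u₀^2| ≤ 40*|u - u₀| := by
  have hu0 : 0 < u := by linarith
  have hu₀0 : 0 < u₀ := by linarith
  obtain ⟨hd1, hd2⟩ := abs_le.mp h
  have hub : u ≤ 5/4 := by linarith
  have e : 1/u^2 - 1/u₀^2 = (u₀^2 - u^2)/(u^2*u₀^2) := by
    field_simp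
  rw [e, abs_div, abs_of_pos (by positivity : (0:ℝ) < u^2*u₀^2)]
  rw [div_le_iff₀ (by positivity : (0:ℝ) < u^2*u₀^2)]
  have e2 : |u₀^2 - u^2| = |u - u₀| * (u₀ + u) := by
    rw [show u₀^2 - u^2 = (u₀ - u)*(u₀+u) by ring, abs_mul, abs_sub_comm,
      abs_of_pos (by linarith : (0:ℝ) < u₀ + u)]
  rw [e2]
  have hx : (7/25:ℝ) ≤ u*u₀ := by nlinarith
  have h5 : (7/10)*u ≤ u*u₀ := by nlinarith
  have h6 : (2/5)*u₀ ≤ u*u₀ := by nlinarith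
  have hbound : u₀ + u ≤ 40 * (u^2 * u₀^2) := by nlinarith [hx, h5, h6, mul_pos hu0 hu₀0]
  nlinarith [abs_nonneg (u - u₀)]

set_option maxHeartbeats 2000000 in
lemma main_mem {p : ℝ × ℝ} (hp : p ≠ 0) : ∀ z : ℝ × ℝ, z ∈ OC p := by
  obtain ⟨q, hq, hqx⟩ := exists_xpos hp
  have hax : ∀ b : ℝ, ((0:ℝ), b) ∈ OC p := fun b => yaxis_mem q hq hqx b
  intro z
  obtain ⟨a, b⟩ := z
  rcases lt_trichotomy a 0 with hneg | hzero | hpos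
  rotate_left
  · rw [hzero]; exact hax b
  · -- a > 0 : use right half-parabolas
    rw [show ((a,b) : ℝ×ℝ) ∈ OC p ↔ ((a,b):ℝ×ℝ) ∈ closure (OC p) by
      rw [(isClosed_OC p).closure_eq]]
    rw [Metric.mem_closure_iff]
    intro ε hε
    set r : ℝ := b / a^2 with hr_def
    set mI : ℤ := ⌊r⌋ - 1 with hmI_def
    set c₀ : ℝ := r - (mI:ℝ) with hc₀_def
    have hc₀1 : 1 ≤ c₀ := by
      have := Int.floor_le r
      rw [hc₀_def, hmI_def]; push_cast; linarith
    have hc₀2 : c₀ ≤ 2 := by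
      have := Int.lt_floor_add_one r
      rw [hc₀_def, hmI_def]; push_cast; linarith
    have hc₀0 : 0 < c₀ := by linarith
    set u₀ : ℝ := 1 / Real.sqrt c₀ with hu₀_def
    have hsc : 0 < Real.sqrt c₀ := Real.sqrt_pos.mpr hc₀0
    have hsc1 : 1 ≤ Real.sqrt c₀ := Real.one_le_sqrt.mpr hc₀1
    have hsc2 : Real.sqrt c₀ ≤ 10/7 := by
      rw [show (10/7:ℝ) = Real.sqrt ((10/7)^2) from (Real.sqrt_sq (by norm_num)).symm]
      exact Real.sqrt_le_sqrt (by nlinarith)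
    have hu₀a : 7/10 ≤ u₀ := by
      rw [hu₀_def, le_div_iff₀ hsc]; linarith
    have hu₀b : u₀ ≤ 1 := by
      rw [hu₀_def, div_le_one hsc]; exact hsc1
    have hu₀pos : 0 < u₀ := by linarith
    set δ : ℝ := min (1/4) (ε / (40*(a^2+1))) with hδ_def
    have hδ0 : 0 < δ := lt_min (by norm_num) (by positivity)
    obtain ⟨u, huG, hu0, huerr⟩ := oneD_dense (GR_one hax)
      (fun u hu k => GR_T hu k) (fun u hu m hm => GR_U hu m hm) u₀ hu₀pos δ hδ0
    have hmem := huG.2 a hpos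
    have h := OC_vm mI hmem
    simp only at h
    rw [sq2_of_pos hpos] at h
    refine ⟨(a, a^2/u^2 + (mI:ℝ)*a^2), h, ?_⟩
    rw [Prod.dist_eq]
    apply max_lt
    · simpa using hε
    · rw [Real.dist_eq]
      have hbe : b = (c₀ + (mI:ℝ)) * a^2 := by
        rw [hc₀_def, hr_def]; field_simp; ring
      have huerr' : |u - u₀| ≤ 1/4 := le_trans huerr.le (min_le_left _ _)
      obtain ⟨hw1, hw2⟩ := abs_le.mp huerr'
      have hu25 : 2/5 ≤ u := by linarith
      have hinv := aux_inv hu25 hu₀a hu₀b huerr'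
      have hu₀sq : 1/u₀^2 = c₀ := by
        rw [hu₀_def, div_pow, one_pow, Real.sq_sqrt hc₀0.le, one_div_one_div]
      have e3 : b - (a^2/u^2 + (mI:ℝ)*a^2) = a^2 * (c₀ - 1/u^2) := by
        rw [hbe]; field_simp; ring
      rw [e3, abs_mul, abs_of_nonneg (sq_nonneg a)]
      have e4 : |c₀ - 1/u^2| = |1/u^2 - 1/u₀^2| := by
        rw [← hu₀sq, abs_sub_comm]
      rw [e4]
      have step1 : a^2 * |1/u^2 - 1/u₀^2| ≤ a^2 * (40*|u - u₀|) :=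
        mul_le_mul_of_nonneg_left hinv (sq_nonneg a)
      have step2 : a^2 * (40*|u - u₀|) < a^2 * (40*δ) := by
        apply mul_lt_mul_of_pos_left _ (by positivity : (0:ℝ) < a^2)
        linarith
      have hδε : δ ≤ ε/(40*(a^2+1)) := min_le_right _ _
      have step3 : a^2 * (40*δ) ≤ a^2 * (40*(ε/(40*(a^2+1)))) := by
        apply mul_le_mul_of_nonneg_left _ (sq_nonneg a)
        linarith
      have step4 : a^2 * (40*(ε/(40*(a^2+1)))) < ε := by
        have h1 : a^2 * (40*(ε/(40*(a^2+1)))) = ε * ((40*a^2)/(40*(a^2+1))) := by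
          field_simp
        have h2 : (40*a^2)/(40*(a^2+1)) < 1 := by
          rw [div_lt_one (by positivity)]; linarith
        rw [h1]
        nlinarith
      exact step1.trans_lt (step2.trans (step3.trans_lt step4))
  · -- a < 0 : use left half-parabolas
    set t : ℝ := -a with ht_def
    have ht : 0 < t := by rw [ht_def]; linarith
    rw [show ((a,b) : ℝ×ℝ) ∈ OC p ↔ ((a,b):ℝ×ℝ) ∈ closure (OC p) by
      rw [(isClosed_OC p).closure_eq]]
    rw [Metric.mem_closure_iff]
    intro ε hε
    set r : ℝ := b / t^2 with hr_def
    set mI : ℤ := -⌊r⌋ - 2 with hmI_def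
    set c₀ : ℝ := -r - (mI:ℝ) with hc₀_def
    have hc₀1 : 1 ≤ c₀ := by
      have := Int.lt_floor_add_one r
      rw [hc₀_def, hmI_def]; push_cast; linarith
    have hc₀2 : c₀ ≤ 2 := by
      have := Int.floor_le r
      rw [hc₀_def, hmI_def]; push_cast; linarith
    have hc₀0 : 0 < c₀ := by linarith
    set u₀ : ℝ := 1 / Real.sqrt c₀ with hu₀_def
    have hsc : 0 < Real.sqrt c₀ := Real.sqrt_pos.mpr hc₀0
    have hsc1 : 1 ≤ Real.sqrt c₀ := Real.one_le_sqrt.mpr hc₀1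
    have hsc2 : Real.sqrt c₀ ≤ 10/7 := by
      rw [show (10/7:ℝ) = Real.sqrt ((10/7)^2) from (Real.sqrt_sq (by norm_num)).symm]
      exact Real.sqrt_le_sqrt (by nlinarith)
    have hu₀a : 7/10 ≤ u₀ := by
      rw [hu₀_def, le_div_iff₀ hsc]; linarith
    have hu₀b : u₀ ≤ 1 := by
      rw [hu₀_def, div_le_one hsc]; exact hsc1
    have hu₀pos : 0 < u₀ := by linarith
    set δ : ℝ := min (1/4) (ε / (40*(t^2+1))) with hδ_def
    have hδ0 : 0 < δ := lt_min (by norm_num) (by positivity)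
    obtain ⟨u, huG, hu0, huerr⟩ := oneD_dense (GL_one hax)
      (fun u hu k => GL_T hu k) (fun u hu m hm => GL_U hu m hm) u₀ hu₀pos δ hδ0
    have hmem := huG.2 t ht
    have h := OC_vm mI hmem
    simp only at h
    rw [sq2_of_neg (by linarith : -t < 0)] at h
    have hxco : -t = a := by rw [ht_def]; ring
    rw [hxco] at h
    refine ⟨(a, -(t^2/u^2) + (mI:ℝ) * -a^2), h, ?_⟩
    rw [Prod.dist_eq]
    apply max_lt
    · simpa using hε
    · rw [Real.dist_eq]
      have hbe : b = r * t^2 := by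
        rw [hr_def]; field_simp
      have huerr' : |u - u₀| ≤ 1/4 := le_trans huerr.le (min_le_left _ _)
      obtain ⟨hw1, hw2⟩ := abs_le.mp huerr'
      have hu25 : 2/5 ≤ u := by linarith
      have hinv := aux_inv hu25 hu₀a hu₀b huerr'
      have hu₀sq : 1/u₀^2 = c₀ := by
        rw [hu₀_def, div_pow, one_pow, Real.sq_sqrt hc₀0.le, one_div_one_div]
      have e3 : b - (-(t^2/u^2) + (mI:ℝ) * -a^2) = t^2 * (1/u^2 - c₀) := by
        rw [hbe, hc₀_def, ht_def]; field_simp; ring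
      rw [e3, abs_mul, abs_of_nonneg (sq_nonneg t)]
      have e4 : |1/u^2 - c₀| = |1/u^2 - 1/u₀^2| := by
        rw [← hu₀sq]
      rw [e4]
      have step1 : t^2 * |1/u^2 - 1/u₀^2| ≤ t^2 * (40*|u - u₀|) :=
        mul_le_mul_of_nonneg_left hinv (sq_nonneg t)
      have step2 : t^2 * (40*|u - u₀|) < t^2 * (40*δ) := by
        apply mul_lt_mul_of_pos_left _ (by positivity : (0:ℝ) < t^2)
        linarith
      have hδε : δ ≤ ε/(40*(t^2+1)) := min_le_right _ _
      have step3 : t^2 * (40*δ) ≤ t^2 * (40*(ε/(40*(t^2+1)))) := by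
        apply mul_le_mul_of_nonneg_left _ (sq_nonneg t)
        linarith
      have step4 : t^2 * (40*(ε/(40*(t^2+1)))) < ε := by
        have h1 : t^2 * (40*(ε/(40*(t^2+1)))) = ε * ((40*t^2)/(40*(t^2+1))) := by
          field_simp
        have h2 : (40*t^2)/(40*(t^2+1)) < 1 := by
          rw [div_lt_one (by positivity)]; linarith
        rw [h1]
        nlinarith
      exact step1.trans_lt (step2.trans (step3.trans_lt step4))

/-- For σ(x) = sgn(x)x², every nonzero point of the plane has a dense orbit
under the group generated by h_σ and v_σ. -/
theorem stmt_11 (p : ℝ × ℝ) (hp : p ≠ 0) :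
    Dense {q : ℝ × ℝ | ∃ g ∈ (Subgroup.closure {h2e, v2e} : Subgroup (Equiv.Perm (ℝ × ℝ))),
      g p = q} := by
  intro z
  exact main_mem hp z
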